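/- CCM strictly increases with dimension on GHZ states: fix d > 0; suppose that for every K ≥ 2, D(ρ_{GHZ_K}, (ρ_{GHZ_K})_A ⊠ (ρ_{GHZ_K})_B) = 1 for every bipartition (A,B) of the K qubits, and that for every M ≥ 2 and every bipartition (A,B) of the M qubits, D(τ_M, (τ_M)_A ⊠ (τ_M)_B) = d. Then for all M, N with 2 ≤ M < N, C(ρ_{GHZ_M}) < C(ρ_{GHZ_N}). -/

import Mathlib

open scoped BigOperators ComplexOrder Matrix

/-- Matrices representing operators on qubits indexed by `ι`. -/
abbrev QMat (ι : Type) : Type := Matrix (ι → Fin 2) (ι → Fin 2) ℂ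

/-- A multi-qubit state: positive semidefinite with trace one. -/
def IsState {ι : Type} [Fintype ι] [DecidableEq ι] (ρ : QMat ι) : Prop :=
  ρ.PosSemidef ∧ ρ.trace = 1

/-- Combine `u : A → Fin 2` with `w : Aᶜ → Fin 2` into a function on all qubits. -/
def glue {ι : Type} [Fintype ι] [DecidableEq ι] (A : Finset ι)
    (u : {x // x ∈ A} → Fin 2) (w : {x // x ∈ Aᶜ} → Fin 2) : ι → Fin 2 :=
  fun x => if h : x ∈ A then u ⟨x, h⟩ else w ⟨x, Finset.mem_compl.mpr h⟩

/-- The reduced matrix on the qubits in `A`, obtained by tracing out `Aᶜ`;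
`Tr_B ρ = reduceTo Bᶜ ρ`. -/
noncomputable def reduceTo {ι : Type} [Fintype ι] [DecidableEq ι] (A : Finset ι)
    (ρ : QMat ι) : QMat {x // x ∈ A} :=
  fun u v => ∑ w : {x // x ∈ Aᶜ} → Fin 2, ρ (glue A u w) (glue A v w)

/-- The Kronecker product of a state on `A` and a state on `Aᶜ`, with the tensor
factors placed back at their original qubit positions. -/
def boxProd {ι : Type} [Fintype ι] [DecidableEq ι] (A : Finset ι)
    (σ₁ : QMat {x // x ∈ A}) (σ₂ : QMat {x // x ∈ Aᶜ}) : QMat ι :=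
  fun x y =>
    σ₁ (fun a => x a.1) (fun a => y a.1) * σ₂ (fun b => x b.1) (fun b => y b.1)

/-- The cumulative correlation measure (CCM), defined recursively: it vanishes on
one-qubit states, and otherwise is the minimum over all bipartitions `(A, Aᶜ)` of
`2^(N-2) * D(ρ, ρ_A ⊠ ρ_{Aᶜ}) + C(ρ_A) + C(ρ_{Aᶜ})`. -/
noncomputable def CCM (D : ∀ (κ : Type) [Fintype κ] [DecidableEq κ], QMat κ → QMat κ → ℝ)
    (ι : Type) [Fintype ι] [DecidableEq ι] (ρ : QMat ι) : ℝ :=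
  if Fintype.card ι ≤ 1 then 0
  else
    sInf { r : ℝ |
      ∃ A : {A : Finset ι // A.Nonempty ∧ Aᶜ.Nonempty},
        r = (2 : ℝ) ^ (Fintype.card ι - 2) *
              D ι ρ (boxProd A.1 (reduceTo A.1 ρ) (reduceTo (A.1 : Finset ι)ᶜ ρ)) +
            CCM D {x // x ∈ A.1} (reduceTo A.1 ρ) +
            CCM D {x // x ∈ (A.1 : Finset ι)ᶜ} (reduceTo (A.1 : Finset ι)ᶜ ρ) }
termination_by Fintype.card ι
decreasing_by
  · have hA : (A.1 : Finset ι) ≠ Finset.univ := by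
      intro h
      rcases A.2.2 with ⟨x, hx⟩
      rw [h] at hx
      simp at hx
    calc Fintype.card {x // x ∈ A.1} = (A.1 : Finset ι).card := Fintype.card_coe _
      _ < Fintype.card ι := (Finset.card_lt_iff_ne_univ _).mpr hA
  · have hA : ((A.1 : Finset ι)ᶜ : Finset ι) ≠ Finset.univ :=
      (Finset.compl_ne_univ_iff_nonempty _).mpr A.2.1
    calc Fintype.card {x // x ∈ (A.1 : Finset ι)ᶜ} = ((A.1 : Finset ι)ᶜ).card :=
        Fintype.card_coe _
      _ < Fintype.card ι := (Finset.card_lt_iff_ne_univ _).mpr hA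
/-- The GHZ state vector on qubits indexed by `ι`: value `1/√2` at the all-zeros
and all-ones functions, and `0` elsewhere. -/
noncomputable def ghzVec (ι : Type) [Fintype ι] [DecidableEq ι] : (ι → Fin 2) → ℂ :=
  fun x => if x = (fun _ => 0) ∨ x = (fun _ => 1) then ((Real.sqrt 2 : ℂ))⁻¹ else 0

/-- The GHZ projector `|GHZ⟩⟨GHZ|`. -/
noncomputable def ghzProj (ι : Type) [Fintype ι] [DecidableEq ι] : QMat ι :=
  fun x y => ghzVec ι x * star (ghzVec ι y)

/-- The GHZ-diagonal state `τ = ½(e₀e₀† + e₁e₁†)`: the diagonal matrix with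
entries `½` at the all-zeros and all-ones indices and `0` elsewhere. -/
noncomputable def tau (ι : Type) [Fintype ι] [DecidableEq ι] : QMat ι :=
  fun x y =>
    (if x = (fun _ => 0) ∧ y = (fun _ => 0) then ((2 : ℂ))⁻¹ else 0) +
    (if x = (fun _ => 1) ∧ y = (fun _ => 1) then ((2 : ℂ))⁻¹ else 0)
/-- The GHZ recursion value `F(x, n)` with fixed parameter `d`:
`F(x,1) = 0`, `F(x,2) = x`, `F(x,3) = 2x + d`,
`F(x,N) = 2^(N−2)·x + 2·F(d, N/2)` for even `N ≥ 4`, and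
`F(x,N) = 2^(N−2)·x + F(d, (N−1)/2) + F(d, (N+1)/2)` for odd `N ≥ 5`. -/
noncomputable def F (d : ℝ) (x : ℝ) (n : ℕ) : ℝ :=
  if n ≤ 1 then 0
  else if n = 2 then x
  else if n = 3 then 2 * x + d
  else if n % 2 = 0 then (2 : ℝ) ^ (n - 2) * x + 2 * F d d (n / 2)
  else (2 : ℝ) ^ (n - 2) * x + F d d ((n - 1) / 2) + F d d ((n + 1) / 2)
termination_by n
decreasing_by
  · omega
  · omega
  · omega

variable {ι : Type} [Fintype ι] [DecidableEq ι]

lemma glue_eq_const (A : Finset ι) (u : {x // x ∈ A} → Fin 2)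
    (w : {x // x ∈ Aᶜ} → Fin 2) (c : Fin 2) :
    glue A u w = (fun _ => c) ↔ (u = fun _ => c) ∧ (w = fun _ => c) := by
  constructor
  · intro h
    constructor
    · funext a
      have := congrFun h a.1
      simpa [glue, a.2] using this
    · funext b
      have hb : b.1 ∉ A := Finset.mem_compl.mp b.2
      have := congrFun h b.1
      simp only [glue, dif_neg hb] at this
      simpa using this
  · rintro ⟨h1, h2⟩
    funext x
    by_cases hx : x ∈ A
    · simp [glue, hx, congrFun h1]
    · simp [glue, hx, congrFun h2]

lemma reduceTo_tau (A : Finset ι) : reduceTo A (tau ι) = tau {x // x ∈ A} := by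
  ext u v
  simp only [reduceTo, tau]
  have key : ∀ w : {x // x ∈ Aᶜ} → Fin 2,
      ((if glue A u w = (fun _ => 0) ∧ glue A v w = (fun _ => 0) then ((2:ℂ))⁻¹ else 0) +
       (if glue A u w = (fun _ => 1) ∧ glue A v w = (fun _ => 1) then ((2:ℂ))⁻¹ else 0)) =
      ((if (u = fun _ => 0) ∧ (v = fun _ => 0) ∧ w = (fun _ => 0) then ((2:ℂ))⁻¹ else 0) +
       (if (u = fun _ => 1) ∧ (v = fun _ => 1) ∧ w = (fun _ => 1) then ((2:ℂ))⁻¹ else 0)) := by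
    intro w
    simp only [glue_eq_const]
    congr 1 <;> { apply if_congr _ rfl rfl; tauto }
  rw [Finset.sum_congr rfl (fun w _ => key w), Finset.sum_add_distrib]
  congr 1
  · by_cases h : (u = fun _ => 0) ∧ (v = fun _ => 0)
    · rw [if_pos h]
      rw [Finset.sum_eq_single (fun _ => (0 : Fin 2))]
      · simp [h]
      · intro b _ hb; simp [h, hb]
      · simp
    · rw [if_neg h]
      apply Finset.sum_eq_zero
      intro w _
      rw [if_neg]
      tauto
  · by_cases h : (u = fun _ => 1) ∧ (v = fun _ => 1)
    · rw [if_pos h]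
      rw [Finset.sum_eq_single (fun _ => (1 : Fin 2))]
      · simp [h]
      · intro b _ hb; simp [h, hb]
      · simp
    · rw [if_neg h]
      apply Finset.sum_eq_zero
      intro w _
      rw [if_neg]
      tauto

lemma reduceTo_ghz (A : Finset ι) (hA : Aᶜ.Nonempty) :
    reduceTo A (ghzProj ι) = tau {x // x ∈ A} := by
  obtain ⟨b0, hb0⟩ := hA
  have h01 : (fun _ : {x // x ∈ Aᶜ} => (0 : Fin 2)) ≠ (fun _ => (1 : Fin 2)) := by
    intro h
    have := congrFun h ⟨b0, hb0⟩
    simp at this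
  ext u v
  simp only [reduceTo, ghzProj, ghzVec]
  have key : ∀ w : {x // x ∈ Aᶜ} → Fin 2,
      ((if glue A u w = (fun _ => 0) ∨ glue A u w = (fun _ => 1)
          then ((Real.sqrt 2 : ℂ))⁻¹ else 0) *
        star (if glue A v w = (fun _ => 0) ∨ glue A v w = (fun _ => 1)
          then ((Real.sqrt 2 : ℂ))⁻¹ else 0)) =
      ((if (u = fun _ => 0) ∧ (v = fun _ => 0) ∧ w = (fun _ => 0) then ((2:ℂ))⁻¹ else 0) +
       (if (u = fun _ => 1) ∧ (v = fun _ => 1) ∧ w = (fun _ => 1) then ((2:ℂ))⁻¹ else 0)) := by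
    intro w
    have hsq : ((Real.sqrt 2 : ℂ))⁻¹ * ((Real.sqrt 2 : ℂ))⁻¹ = ((2:ℂ))⁻¹ := by
      rw [← mul_inv, ← Complex.ofReal_mul, Real.mul_self_sqrt (by norm_num)]
      norm_num
    simp only [glue_eq_const]
    by_cases hw0 : w = fun _ => 0
    · subst hw0
      by_cases hu : u = fun _ => 0 <;> by_cases hv : v = fun _ => 0 <;>
        simp [hu, hv, h01, h01.symm, hsq]
    · by_cases hw1 : w = fun _ => 1
      · subst hw1
        by_cases hu : u = fun _ => 1 <;> by_cases hv : v = fun _ => 1 <;>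
          simp [hu, hv, h01, h01.symm, hsq, hw0]
      · simp [hw0, hw1]
  rw [Finset.sum_congr rfl (fun w _ => key w), Finset.sum_add_distrib]
  simp only [tau]
  congr 1
  · by_cases h : (u = fun _ => 0) ∧ (v = fun _ => 0)
    · rw [if_pos h]
      rw [Finset.sum_eq_single (fun _ => (0 : Fin 2))]
      · simp [h]
      · intro b _ hb; simp [h, hb]
      · simp
    · rw [if_neg h]
      apply Finset.sum_eq_zero
      intro w _
      rw [if_neg]
      tauto
  · by_cases h : (u = fun _ => 1) ∧ (v = fun _ => 1)
    · rw [if_pos h]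
      rw [Finset.sum_eq_single (fun _ => (1 : Fin 2))]
      · simp [h]
      · intro b _ hb; simp [h, hb]
      · simp
    · rw [if_neg h]
      apply Finset.sum_eq_zero
      intro w _
      rw [if_neg]
      tauto

/-- Fuel-based helper for the split-recursion. -/
noncomputable def Gaux (d : ℝ) : ℕ → ℕ → ℝ
  | 0, _ => 0
  | f + 1, n =>
    if h : 2 ≤ n then
      d * 2 ^ (n - 2) +
        (Finset.Icc 1 (n - 1)).inf' (Finset.nonempty_Icc.mpr (by omega))
          (fun k => Gaux d f k + Gaux d f (n - k))
    else 0

noncomputable def G (d : ℝ) (n : ℕ) : ℝ := Gaux d n n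

lemma Gaux_of_le_one (d : ℝ) (f n : ℕ) (hn : n ≤ 1) : Gaux d f n = 0 := by
  cases f with
  | zero => rfl
  | succ f => simp [Gaux, show ¬ 2 ≤ n by omega]

lemma Gaux_stable (d : ℝ) : ∀ n f f', n ≤ f → n ≤ f' → Gaux d f n = Gaux d f' n := by
  intro n
  induction n using Nat.strong_induction_on with
  | _ n ih =>
    intro f f' hf hf'
    by_cases hn : n ≤ 1
    · rw [Gaux_of_le_one d f n hn, Gaux_of_le_one d f' n hn]
    · obtain ⟨g, rfl⟩ : ∃ g, f = g + 1 := ⟨f - 1, by omega⟩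
      obtain ⟨g', rfl⟩ : ∃ g', f' = g' + 1 := ⟨f' - 1, by omega⟩
      simp only [Gaux, dif_pos (show 2 ≤ n by omega)]
      congr 1
      refine Finset.inf'_congr _ rfl ?_
      intro k hk
      rw [Finset.mem_Icc] at hk
      rw [ih k (by omega) g g' (by omega) (by omega),
        ih (n - k) (by omega) g g' (by omega) (by omega)]

lemma Gaux_eq_G (d : ℝ) {n f : ℕ} (h : n ≤ f) : Gaux d f n = G d n :=
  Gaux_stable d n f n h le_rfl

lemma G_of_le_one (d : ℝ) {n : ℕ} (hn : n ≤ 1) : G d n = 0 := Gaux_of_le_one d n n hn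

/-- The minimal split value. -/
noncomputable def T (d : ℝ) (n : ℕ) : ℝ :=
  if h : 2 ≤ n then
    (Finset.Icc 1 (n - 1)).inf' (Finset.nonempty_Icc.mpr (by omega))
      (fun k => G d k + G d (n - k))
  else 0

lemma G_eq (d : ℝ) {n : ℕ} (hn : 2 ≤ n) : G d n = d * 2 ^ (n - 2) + T d n := by
  obtain ⟨m, rfl⟩ : ∃ m, n = m + 1 := ⟨n - 1, by omega⟩
  rw [G, T, dif_pos hn]
  simp only [Gaux, dif_pos hn]
  congr 1
  refine Finset.inf'_congr _ rfl ?_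
  intro k hk
  rw [Finset.mem_Icc] at hk
  rw [Gaux_eq_G d (show k ≤ m by omega), Gaux_eq_G d (show m + 1 - k ≤ m by omega)]

lemma G_nonneg (d : ℝ) (hd : 0 ≤ d) : ∀ n, 0 ≤ G d n := by
  intro n
  induction n using Nat.strong_induction_on with
  | _ n ih =>
    by_cases hn : n ≤ 1
    · rw [G_of_le_one d hn]
    · rw [G_eq d (by omega)]
      have h1 : (0:ℝ) ≤ d * 2 ^ (n - 2) := by positivity
      have h2 : (0:ℝ) ≤ T d n := by
        rw [T, dif_pos (show 2 ≤ n by omega)]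
        apply Finset.le_inf'
        intro k hk
        rw [Finset.mem_Icc] at hk
        have := ih k (by omega)
        have := ih (n - k) (by omega)
        linarith
      linarith

lemma T_nonneg (d : ℝ) (hd : 0 ≤ d) (n : ℕ) : 0 ≤ T d n := by
  by_cases hn : 2 ≤ n
  · rw [T, dif_pos hn]
    apply Finset.le_inf'
    intro k hk
    have := G_nonneg d hd k
    have := G_nonneg d hd (n - k)
    linarith
  · rw [T, dif_neg hn]

lemma T_le_G (d : ℝ) (hd : 0 ≤ d) (n : ℕ) (hn : 2 ≤ n) : T d n ≤ G d n := by
  rw [G_eq d hn]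
  have : (0:ℝ) ≤ d * 2 ^ (n - 2) := by positivity
  linarith

lemma G_mono (d : ℝ) (hd : 0 ≤ d) : ∀ n, G d n ≤ G d (n + 1) := by
  intro n
  induction n using Nat.strong_induction_on with
  | _ n ih =>
    by_cases hn : n ≤ 1
    · rw [G_of_le_one d hn]
      exact G_nonneg d hd (n + 1)
    · have hn2 : 2 ≤ n := by omega
      rw [G_eq d hn2, G_eq d (show 2 ≤ n + 1 by omega)]
      have hpow : d * 2 ^ (n - 2) ≤ d * 2 ^ (n + 1 - 2) := by
        apply mul_le_mul_of_nonneg_left _ hd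
        exact pow_le_pow_right₀ one_le_two (by omega)
      have hT : T d n ≤ T d (n + 1) := by
        nth_rewrite 2 [T]
        rw [dif_pos (show 2 ≤ n + 1 by omega)]
        apply Finset.le_inf'
        intro k hk
        rw [Finset.mem_Icc] at hk
        by_cases hk' : k ≤ n - 1
        · have h1 : T d n ≤ G d k + G d (n - k) := by
            rw [T, dif_pos hn2]
            exact Finset.inf'_le _ (Finset.mem_Icc.mpr ⟨hk.1, hk'⟩)
          have h2 : G d (n - k) ≤ G d (n + 1 - k) := by
            rw [show n + 1 - k = (n - k) + 1 by omega]
            exact ih (n - k) (by omega)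
          linarith
        · rw [show k = n by omega, show n + 1 - n = 1 by omega,
            G_of_le_one d le_rfl, add_zero]
          exact T_le_G d hd n hn2
      linarith

lemma T_mono (d : ℝ) (hd : 0 ≤ d) (n : ℕ) (hn : 2 ≤ n) : T d n ≤ T d (n + 1) := by
  nth_rewrite 2 [T]
  rw [dif_pos (show 2 ≤ n + 1 by omega)]
  apply Finset.le_inf'
  intro k hk
  rw [Finset.mem_Icc] at hk
  by_cases hk' : k ≤ n - 1
  · have h1 : T d n ≤ G d k + G d (n - k) := by
      rw [T, dif_pos hn]
      exact Finset.inf'_le _ (Finset.mem_Icc.mpr ⟨hk.1, hk'⟩)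
    have h2 : G d (n - k) ≤ G d (n + 1 - k) := by
      rw [show n + 1 - k = (n - k) + 1 by omega]
      exact G_mono d hd (n - k)
    linarith
  · rw [show k = n by omega, show n + 1 - n = 1 by omega,
      G_of_le_one d le_rfl, add_zero]
    exact T_le_G d hd n hn
section CCMcalc

variable (D : ∀ (κ : Type) [Fintype κ] [DecidableEq κ], QMat κ → QMat κ → ℝ)

lemma inf'_const_add {s : Finset ℕ} (H : s.Nonempty) (c : ℝ) (f : ℕ → ℝ) :
    s.inf' H (fun k => c + f k) = c + s.inf' H f := by
  apply le_antisymm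
  · obtain ⟨i, hi, hieq⟩ := Finset.exists_mem_eq_inf' H f
    rw [hieq]
    exact Finset.inf'_le _ hi
  · apply Finset.le_inf'
    intro k hk
    exact add_le_add_right (Finset.inf'_le f hk) c

lemma card_mem_Icc {κ : Type} [Fintype κ] [DecidableEq κ] {A : Finset κ}
    (h1 : A.Nonempty) (h2 : Aᶜ.Nonempty) :
    A.card ∈ Finset.Icc 1 (Fintype.card κ - 1) := by
  rw [Finset.mem_Icc]
  have hc : Aᶜ.card = Fintype.card κ - A.card := Finset.card_compl A
  have h1' : 0 < A.card := Finset.card_pos.mpr h1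
  have h2' : 0 < Aᶜ.card := Finset.card_pos.mpr h2
  have h3 : A.card ≤ Fintype.card κ := A.card_le_univ
  omega

lemma ccm_tau (d : ℝ)
    (hτ : ∀ (ι : Type) [Fintype ι] [DecidableEq ι], 2 ≤ Fintype.card ι →
      ∀ A : Finset ι, A.Nonempty → Aᶜ.Nonempty →
        D ι (tau ι) (boxProd A (reduceTo A (tau ι)) (reduceTo Aᶜ (tau ι))) = d) :
    ∀ (n : ℕ) (κ : Type) [Fintype κ] [DecidableEq κ], Fintype.card κ = n →
      CCM D κ (tau κ) = G d n := by
  intro n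
  induction n using Nat.strong_induction_on with
  | _ n ih =>
    intro κ _ _ hcard
    by_cases hn : n ≤ 1
    · rw [CCM, if_pos (by omega), G_of_le_one d hn]
    · have hn2 : 2 ≤ n := by omega
      rw [CCM, if_neg (by omega)]
      have hset : { r : ℝ |
          ∃ A : {A : Finset κ // A.Nonempty ∧ Aᶜ.Nonempty},
            r = (2 : ℝ) ^ (Fintype.card κ - 2) *
                  D κ (tau κ) (boxProd A.1 (reduceTo A.1 (tau κ)) (reduceTo (A.1 : Finset κ)ᶜ (tau κ))) +
                CCM D {x // x ∈ A.1} (reduceTo A.1 (tau κ)) +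
                CCM D {x // x ∈ (A.1 : Finset κ)ᶜ} (reduceTo (A.1 : Finset κ)ᶜ (tau κ)) } =
          (fun k => (2 : ℝ) ^ (n - 2) * d + (G d k + G d (n - k))) '' ↑(Finset.Icc 1 (n - 1)) := by
        ext r
        constructor
        · rintro ⟨A, rfl⟩
          refine ⟨A.1.card, by simpa [hcard] using card_mem_Icc A.2.1 A.2.2, ?_⟩
          rw [hτ κ (by omega) A.1 A.2.1 A.2.2,
            reduceTo_tau A.1, reduceTo_tau (A.1 : Finset κ)ᶜ,
            ih A.1.card (by have := card_mem_Icc A.2.1 A.2.2; rw [Finset.mem_Icc] at this; omega)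
              _ (by simp [Fintype.card_coe]),
            ih (n - A.1.card) (by have := card_mem_Icc A.2.1 A.2.2; rw [Finset.mem_Icc] at this; omega)
              _ (by simp [Fintype.card_coe, Finset.card_compl, hcard]),
            hcard]
          ring
        · rintro ⟨k, hk, rfl⟩
          rw [Finset.coe_Icc, Set.mem_Icc] at hk
          obtain ⟨A, -, hAcard⟩ := Finset.exists_subset_card_eq
            (show k ≤ (Finset.univ : Finset κ).card by rw [Finset.card_univ, hcard]; omega)
          have hA1 : A.Nonempty := Finset.card_pos.mp (by omega)
          have hA2 : Aᶜ.Nonempty := by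
            apply Finset.card_pos.mp
            rw [Finset.card_compl, hAcard, hcard]
            omega
          refine ⟨⟨A, hA1, hA2⟩, ?_⟩
          rw [hτ κ (by omega) A hA1 hA2, reduceTo_tau A, reduceTo_tau Aᶜ,
            ih k (by omega) _ (by simp [Fintype.card_coe, hAcard]),
            ih (n - k) (by omega) _ (by simp [Fintype.card_coe, Finset.card_compl, hAcard, hcard]),
            hcard]
          ring
      rw [hset, ← Finset.inf'_eq_csInf_image _ (Finset.nonempty_Icc.mpr (by omega)),
        inf'_const_add, G_eq d hn2, T, dif_pos hn2]
      ring
end CCMcalc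

lemma ccm_ghz (D : ∀ (κ : Type) [Fintype κ] [DecidableEq κ], QMat κ → QMat κ → ℝ)
    (d : ℝ)
    (hghz : ∀ (ι : Type) [Fintype ι] [DecidableEq ι], 2 ≤ Fintype.card ι →
      ∀ A : Finset ι, A.Nonempty → Aᶜ.Nonempty →
        D ι (ghzProj ι)
          (boxProd A (reduceTo A (ghzProj ι)) (reduceTo Aᶜ (ghzProj ι))) = 1)
    (hτ : ∀ (ι : Type) [Fintype ι] [DecidableEq ι], 2 ≤ Fintype.card ι →
      ∀ A : Finset ι, A.Nonempty → Aᶜ.Nonempty →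
        D ι (tau ι) (boxProd A (reduceTo A (tau ι)) (reduceTo Aᶜ (tau ι))) = d)
    (n : ℕ) (hn2 : 2 ≤ n) (κ : Type) [Fintype κ] [DecidableEq κ]
    (hcard : Fintype.card κ = n) :
    CCM D κ (ghzProj κ) = (2 : ℝ) ^ (n - 2) + T d n := by
  rw [CCM, if_neg (by omega)]
  have hset : { r : ℝ |
      ∃ A : {A : Finset κ // A.Nonempty ∧ Aᶜ.Nonempty},
        r = (2 : ℝ) ^ (Fintype.card κ - 2) *
              D κ (ghzProj κ) (boxProd A.1 (reduceTo A.1 (ghzProj κ)) (reduceTo (A.1 : Finset κ)ᶜ (ghzProj κ))) +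
            CCM D {x // x ∈ A.1} (reduceTo A.1 (ghzProj κ)) +
            CCM D {x // x ∈ (A.1 : Finset κ)ᶜ} (reduceTo (A.1 : Finset κ)ᶜ (ghzProj κ)) } =
      (fun k => (2 : ℝ) ^ (n - 2) + (G d k + G d (n - k))) '' ↑(Finset.Icc 1 (n - 1)) := by
    ext r
    constructor
    · rintro ⟨A, rfl⟩
      refine ⟨A.1.card, by simpa [hcard] using card_mem_Icc A.2.1 A.2.2, ?_⟩
      rw [hghz κ (by omega) A.1 A.2.1 A.2.2,
        reduceTo_ghz A.1 A.2.2,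
        reduceTo_ghz (A.1 : Finset κ)ᶜ (by rw [compl_compl]; exact A.2.1),
        ccm_tau D d hτ A.1.card _ (by simp [Fintype.card_coe]),
        ccm_tau D d hτ (n - A.1.card) _
          (by simp [Fintype.card_coe, Finset.card_compl, hcard]),
        hcard]
      ring
    · rintro ⟨k, hk, rfl⟩
      rw [Finset.coe_Icc, Set.mem_Icc] at hk
      obtain ⟨A, -, hAcard⟩ := Finset.exists_subset_card_eq
        (show k ≤ (Finset.univ : Finset κ).card by rw [Finset.card_univ, hcard]; omega)
      have hA1 : A.Nonempty := Finset.card_pos.mp (by omega)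
      have hA2 : Aᶜ.Nonempty := by
        apply Finset.card_pos.mp
        rw [Finset.card_compl, hAcard, hcard]
        omega
      refine ⟨⟨A, hA1, hA2⟩, ?_⟩
      rw [hghz κ (by omega) A hA1 hA2, reduceTo_ghz A hA2,
        reduceTo_ghz Aᶜ (by rw [compl_compl]; exact hA1),
        ccm_tau D d hτ k _ (by simp [Fintype.card_coe, hAcard]),
        ccm_tau D d hτ (n - k) _
          (by simp [Fintype.card_coe, Finset.card_compl, hAcard, hcard]),
        hcard]
      ring
  rw [hset, ← Finset.inf'_eq_csInf_image _ (Finset.nonempty_Icc.mpr (by omega)),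
    inf'_const_add, T, dif_pos hn2]


/-- CCM strictly increases with dimension on GHZ states: fix
`d > 0`; suppose that for every system of `K ≥ 2` qubits,
`D(ρ_{GHZ_K}, (ρ_{GHZ_K})_A ⊠ (ρ_{GHZ_K})_B) = 1` for every bipartition `(A,B)`,
and `D(τ_M, (τ_M)_A ⊠ (τ_M)_B) = d` for every system of `M ≥ 2` qubits and every
bipartition. Then for all `2 ≤ M < N`, `C(ρ_{GHZ_M}) < C(ρ_{GHZ_N})`. -/
theorem ccm_ghz_strictMono
    (D : ∀ (κ : Type) [Fintype κ] [DecidableEq κ], QMat κ → QMat κ → ℝ)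
    (d : ℝ) (hd : 0 < d)
    (hghz : ∀ (ι : Type) [Fintype ι] [DecidableEq ι], 2 ≤ Fintype.card ι →
      ∀ A : Finset ι, A.Nonempty → Aᶜ.Nonempty →
        D ι (ghzProj ι)
          (boxProd A (reduceTo A (ghzProj ι)) (reduceTo Aᶜ (ghzProj ι))) = 1)
    (hτ : ∀ (ι : Type) [Fintype ι] [DecidableEq ι], 2 ≤ Fintype.card ι →
      ∀ A : Finset ι, A.Nonempty → Aᶜ.Nonempty →
        D ι (tau ι) (boxProd A (reduceTo A (tau ι)) (reduceTo Aᶜ (tau ι))) = d)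
    (M N : ℕ) (hM : 2 ≤ M) (hMN : M < N) :
    CCM D (Fin M) (ghzProj (Fin M)) < CCM D (Fin N) (ghzProj (Fin N)) := by
  have hstep : ∀ n, 2 ≤ n →
      (2 : ℝ) ^ (n - 2) + T d n < (2 : ℝ) ^ (n + 1 - 2) + T d (n + 1) := by
    intro n hn
    have h1 : (2 : ℝ) ^ (n - 2) < (2 : ℝ) ^ (n + 1 - 2) :=
      pow_lt_pow_right₀ one_lt_two (by omega)
    have h2 : T d n ≤ T d (n + 1) := T_mono d hd.le n hn
    linarith
  have key : ∀ n, 2 ≤ n → ∀ m, n < m →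
      (2 : ℝ) ^ (n - 2) + T d n < (2 : ℝ) ^ (m - 2) + T d m := by
    intro n hn m hm
    induction m with
    | zero => omega
    | succ m ihm =>
      by_cases hm' : n < m
      · exact lt_trans (ihm hm') (hstep m (by omega))
      · have : m = n := by omega
        subst this
        exact hstep m hn
  rw [ccm_ghz D d hghz hτ M hM (Fin M) (Fintype.card_fin M),
    ccm_ghz D d hghz hτ N (by omega) (Fin N) (Fintype.card_fin N)]
  exact key M hM N hMN
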